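/- For μ > 0 and a continuous, bounded, nonnegative function i : ℝ → ℝ, define v(h) = ∫_{-∞}^h (1/√(2μ)) e^{√(2μ)(η - h)} i(η) dη + ∫_h^∞ (1/√(2μ)) e^{√(2μ)(h - η)} i(η) dη. Then v is differentiable and |v'(h)| ≤ √(2μ) · v(h) for all h ∈ ℝ. -/

import Mathlib

open MeasureTheory

lemma negcomp_integrableOn {F : ℝ → ℝ} {a : ℝ} (hF : IntegrableOn F (Set.Ici a)) :
    IntegrableOn (fun x => F (-x)) (Set.Iic (-a)) := by
  have A : MeasurableEmbedding (fun x : ℝ => -x) :=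
    (Homeomorph.neg ℝ).isClosedEmbedding.measurableEmbedding
  have hpre : (fun x : ℝ => -x) ⁻¹' Set.Iic (-a) = Set.Ici a := by
    ext x; simp
  have hmeas : ((volume : Measure ℝ).restrict (Set.Iic (-a)))
      = Measure.map (fun x : ℝ => -x) (volume.restrict (Set.Ici a)) := by
    rw [← hpre, ← Measure.restrict_map A.measurable measurableSet_Iic,
      Measure.map_neg_eq_self]
  rw [IntegrableOn, hmeas, A.integrable_map_iff]
  simp only [Function.comp_def, neg_neg]; exact hF

lemma exp_mul_integrableOn_Iic (c b : ℝ) (hc : 0 < c) :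
    IntegrableOn (fun x => Real.exp (c * x)) (Set.Iic b) := by
  have h1 : IntegrableOn (fun x => Real.exp (-c * x)) (Set.Ici (-b)) :=
    (integrableOn_Ici_iff_integrableOn_Ioi enorm_ne_top).mpr (exp_neg_integrableOn_Ioi _ hc)
  have := negcomp_integrableOn h1
  simpa [neg_mul_neg] using this

lemma hasDerivAt_integral_Iic (F : ℝ → ℝ) (hF : Continuous F)
    (hint : ∀ a : ℝ, IntegrableOn F (Set.Iic a)) (b : ℝ) :
    HasDerivAt (fun h => ∫ x in Set.Iic h, F x) (F b) b := by
  have key : ∀ h : ℝ, (∫ x in Set.Iic h, F x)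
      = (∫ x in Set.Iic 0, F x) + ∫ x in (0:ℝ)..h, F x := by
    intro h
    rw [← intervalIntegral.integral_Iic_sub_Iic (hint 0) (hint h)]
    ring
  have H : HasDerivAt (fun h : ℝ => (∫ x in Set.Iic 0, F x) + ∫ x in (0:ℝ)..h, F x) (F b) b :=
    (intervalIntegral.integral_hasDerivAt_right (hF.intervalIntegrable _ _)
      (hF.stronglyMeasurableAtFilter _ _) hF.continuousAt).const_add _
  exact H.congr_of_eventuallyEq (Filter.Eventually.of_forall fun h => key h)

theorem stmt3 (μ : ℝ) (hμ : 0 < μ)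
    (i : ℝ → ℝ) (hic : Continuous i) (hipos : ∀ x, 0 ≤ i x)
    (M : ℝ) (hibdd : ∀ x, i x ≤ M)
    (v : ℝ → ℝ)
    (hv : ∀ h, v h = (∫ η in Set.Iic h,
          (1 / Real.sqrt (2*μ)) * Real.exp (Real.sqrt (2*μ) * (η - h)) * i η)
        + ∫ η in Set.Ici h,
          (1 / Real.sqrt (2*μ)) * Real.exp (Real.sqrt (2*μ) * (h - η)) * i η) :
    Differentiable ℝ v ∧ ∀ h, |deriv v h| ≤ Real.sqrt (2*μ) * v h := by
  set c : ℝ := Real.sqrt (2*μ) with hcdef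
  have hc : 0 < c := Real.sqrt_pos.mpr (by linarith)
  set f : ℝ → ℝ := fun η => Real.exp (c*η) * i η with hfdef
  set G : ℝ → ℝ := fun η => Real.exp (c*η) * i (-η) with hGdef
  set A : ℝ → ℝ := fun t => ∫ x in Set.Iic t, f x with hAdef
  set B : ℝ → ℝ := fun t => ∫ η in Set.Ici t, Real.exp (-(c*η)) * i η with hBdef
  -- integrability
  have hfc : Continuous f := (Real.continuous_exp.comp (continuous_const.mul continuous_id)).mul hic
  have hGc : Continuous G :=
    (Real.continuous_exp.comp (continuous_const.mul continuous_id)).mul (hic.comp continuous_neg)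
  have hdom : ∀ a : ℝ, Integrable (fun x => M * Real.exp (c*x)) (volume.restrict (Set.Iic a)) :=
    fun a => (exp_mul_integrableOn_Iic c a hc).const_mul M
  have hfint : ∀ a : ℝ, IntegrableOn f (Set.Iic a) := by
    intro a
    refine (hdom a).mono' (hfc.aestronglyMeasurable.restrict) ?_
    refine Filter.Eventually.of_forall fun x => ?_
    have h1 : 0 ≤ f x := mul_nonneg (Real.exp_pos _).le (hipos x)
    rw [Real.norm_eq_abs, abs_of_nonneg h1, hfdef]
    calc Real.exp (c*x) * i x ≤ Real.exp (c*x) * M :=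
          mul_le_mul_of_nonneg_left (hibdd x) (Real.exp_pos _).le
      _ = M * Real.exp (c*x) := mul_comm _ _
  have hGint : ∀ a : ℝ, IntegrableOn G (Set.Iic a) := by
    intro a
    refine (hdom a).mono' (hGc.aestronglyMeasurable.restrict) ?_
    refine Filter.Eventually.of_forall fun x => ?_
    have h1 : 0 ≤ G x := mul_nonneg (Real.exp_pos _).le (hipos _)
    rw [Real.norm_eq_abs, abs_of_nonneg h1, hGdef]
    calc Real.exp (c*x) * i (-x) ≤ Real.exp (c*x) * M :=
          mul_le_mul_of_nonneg_left (hibdd _) (Real.exp_pos _).le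
      _ = M * Real.exp (c*x) := mul_comm _ _
  -- B via reflection
  have hBrep : ∀ h : ℝ, B h = ∫ x in Set.Iic (-h), G x := by
    intro h
    have h1 := integral_comp_neg_Iic (-h) (fun η => Real.exp (-(c*η)) * i η)
    simp only [neg_neg, mul_neg] at h1
    simp only [hBdef, hGdef]
    rw [MeasureTheory.integral_Ici_eq_integral_Ioi, ← h1]
  -- v in terms of A and B
  have hvAB : ∀ h : ℝ, v h = (1/c) * (Real.exp (-(c*h)) * A h + Real.exp (c*h) * B h) := by
    intro h
    rw [hv h]
    have e1 : ∀ η : ℝ, (1/c) * Real.exp (c*(η - h)) * i η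
        = ((1/c) * Real.exp (-(c*h))) * f η := by
      intro η
      rw [hfdef, show c*(η - h) = c*η + -(c*h) by ring, Real.exp_add]
      ring
    have e2 : ∀ η : ℝ, (1/c) * Real.exp (c*(h - η)) * i η
        = ((1/c) * Real.exp (c*h)) * (Real.exp (-(c*η)) * i η) := by
      intro η
      rw [show c*(h - η) = c*h + -(c*η) by ring, Real.exp_add]
      ring
    simp only [e1, e2, integral_const_mul]
    rw [hAdef, hBdef]
    ring
  -- derivatives
  have hA : ∀ h : ℝ, HasDerivAt A (f h) h := fun h => hasDerivAt_integral_Iic f hfc hfint h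
  have hB : ∀ h : ℝ, HasDerivAt B (-(Real.exp (-(c*h)) * i h)) h := by
    intro h
    have h1 := (hasDerivAt_integral_Iic G hGc hGint (-h)).comp h (hasDerivAt_neg h)
    have h2 : B =ᶠ[nhds h] ((fun t => ∫ x in Set.Iic t, G x) ∘ fun x => -x) :=
      Filter.Eventually.of_forall fun t => by
        simp only [Function.comp_apply]; exact hBrep t
    have h3 := h1.congr_of_eventuallyEq h2
    refine h3.congr_deriv (Eq.symm ?_)
    rw [hGdef]
    simp only [neg_neg, mul_neg]
    ring
  have hD : ∀ h : ℝ, HasDerivAt v (Real.exp (c*h) * B h - Real.exp (-(c*h)) * A h) h := by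
    intro h
    have e1 : HasDerivAt (fun x : ℝ => Real.exp (-(c*x))) (Real.exp (-(c*h)) * (-c)) h := by
      have : HasDerivAt (fun x : ℝ => -(c*x)) (-c) h := by
        exact ((hasDerivAt_id h).const_mul c).neg.congr_deriv (by simp)
      exact this.exp
    have e2 : HasDerivAt (fun x : ℝ => Real.exp (c*x)) (Real.exp (c*h) * c) h := by
      have : HasDerivAt (fun x : ℝ => c*x) c h := by
        simpa using (hasDerivAt_id h).const_mul c
      exact this.exp
    have h1 := (((e1.mul (hA h)).add (e2.mul (hB h))).const_mul (1/c)).congr_of_eventuallyEq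
      (Filter.Eventually.of_forall fun x => hvAB x)
    refine h1.congr_deriv (Eq.symm ?_)
    have hee : Real.exp (-(c*h)) * Real.exp (c*h) = 1 := by
      rw [← Real.exp_add]; simp
    rw [hfdef]
    field_simp
    nlinarith [hee]
  refine ⟨fun h => (hD h).differentiableAt, fun h => ?_⟩
  have hA0 : 0 ≤ A h := setIntegral_nonneg measurableSet_Iic fun x _ =>
    mul_nonneg (Real.exp_pos _).le (hipos x)
  have hB0 : 0 ≤ B h := setIntegral_nonneg measurableSet_Ici fun x _ =>
    mul_nonneg (Real.exp_pos _).le (hipos x)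
  rw [(hD h).deriv]
  have hcv : c * v h = Real.exp (-(c*h)) * A h + Real.exp (c*h) * B h := by
    rw [hvAB h]; field_simp
  rw [hcv]
  calc |Real.exp (c*h) * B h - Real.exp (-(c*h)) * A h|
      ≤ |Real.exp (c*h) * B h| + |Real.exp (-(c*h)) * A h| := abs_sub _ _
    _ = Real.exp (c*h) * B h + Real.exp (-(c*h)) * A h := by
        rw [abs_of_nonneg (mul_nonneg (Real.exp_pos _).le hB0),
          abs_of_nonneg (mul_nonneg (Real.exp_pos _).le hA0)]
    _ = Real.exp (-(c*h)) * A h + Real.exp (c*h) * B h := by ring
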